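/- arXiv:cond-mat/0409710 — 2 statements merged into one kernel-verified Lean document; each statement's English description precedes it below -/
import Mathlib

section
/- Let p > 0, N > 0, α > 0, β > 0 be real numbers, and let g̃(x) = ((1 - 1/(p α² N²))·e^{-2 p α N x} + 1/(p α² N²))^{-1} for x in a domain where the bracketed expression is positive. Then the function f̃(x) = ((2 p N + β)/(2p))·(1 - 1/(p α² N²) + e^{2 p α N x}/(p α² N²))^{-p α N} - β/(2p) satisfies f̃(0) = N and solves the linear differential equation f̃'(x) = -2 p · g̃(x) · f̃(x) - β · g̃(x) on that domain. -/
/-- For `p, N, α, β > 0`, with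
`g̃(x) = ((1 - 1/(pα²N²))·e^{-2pαNx} + 1/(pα²N²))⁻¹`, the function
`f̃(x) = ((2pN + β)/(2p))·(1 - 1/(pα²N²) + e^{2pαNx}/(pα²N²))^{-pαN} - β/(2p)`
satisfies `f̃(0) = N` and solves the linear differential equation
`f̃' = -2p·g̃·f̃ - β·g̃` on the domain where the bracketed expression defining `g̃`
is positive. -/
theorem ftilde_solves_linear_ode (p N α β : ℝ) (hp : 0 < p) (hN : 0 < N)
    (hα : 0 < α) (hβ : 0 < β) (gt ft : ℝ → ℝ)
    (hgt : ∀ x : ℝ, gt x =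
      ((1 - 1 / (p * α ^ 2 * N ^ 2)) * Real.exp (-2 * p * α * N * x)
        + 1 / (p * α ^ 2 * N ^ 2))⁻¹)
    (hft : ∀ x : ℝ, ft x =
      (2 * p * N + β) / (2 * p) *
        (1 - 1 / (p * α ^ 2 * N ^ 2)
          + Real.exp (2 * p * α * N * x) / (p * α ^ 2 * N ^ 2)) ^ (-(p * α * N))
        - β / (2 * p)) :
    ft 0 = N ∧
    (∀ x : ℝ,
      0 < (1 - 1 / (p * α ^ 2 * N ^ 2)) * Real.exp (-2 * p * α * N * x)
          + 1 / (p * α ^ 2 * N ^ 2) →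
      HasDerivAt ft (-2 * p * gt x * ft x - β * gt x) x) := by
  have hc : (0:ℝ) < p * α ^ 2 * N ^ 2 := by positivity
  have hcne : (p * α ^ 2 * N ^ 2) ≠ 0 := hc.ne'
  constructor
  · rw [hft 0]
    rw [show (2 : ℝ) * p * α * N * 0 = 0 by ring, Real.exp_zero,
      show (1 - 1 / (p * α ^ 2 * N ^ 2) + 1 / (p * α ^ 2 * N ^ 2)) = 1 by ring,
      Real.one_rpow]
    field_simp
    ring
  · intro x hx
    have hE : (0:ℝ) < Real.exp (2 * p * α * N * x) := Real.exp_pos _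
    have hneg : Real.exp (-2 * p * α * N * x) = (Real.exp (2 * p * α * N * x))⁻¹ := by
      rw [show -2 * p * α * N * x = -(2 * p * α * N * x) by ring, Real.exp_neg]
    have hub : (1 - 1 / (p * α ^ 2 * N ^ 2)
          + Real.exp (2 * p * α * N * x) / (p * α ^ 2 * N ^ 2))
        = Real.exp (2 * p * α * N * x) *
          ((1 - 1 / (p * α ^ 2 * N ^ 2)) * Real.exp (-2 * p * α * N * x)
            + 1 / (p * α ^ 2 * N ^ 2)) := by
      rw [hneg]; field_simp
    have hu : (0:ℝ) < 1 - 1 / (p * α ^ 2 * N ^ 2)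
        + Real.exp (2 * p * α * N * x) / (p * α ^ 2 * N ^ 2) := by
      rw [hub]; exact mul_pos hE hx
    set u : ℝ := 1 - 1 / (p * α ^ 2 * N ^ 2)
        + Real.exp (2 * p * α * N * x) / (p * α ^ 2 * N ^ 2) with hu_def
    -- inner derivative
    have h1 : HasDerivAt (fun y : ℝ => 2 * p * α * N * y) (2 * p * α * N) x := by
      simpa using (hasDerivAt_id x).const_mul (2 * p * α * N)
    have h2 : HasDerivAt (fun y : ℝ => 1 - 1 / (p * α ^ 2 * N ^ 2)
          + Real.exp (2 * p * α * N * y) / (p * α ^ 2 * N ^ 2))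
        (Real.exp (2 * p * α * N * x) * (2 * p * α * N) / (p * α ^ 2 * N ^ 2)) x := by
      exact ((h1.exp).div_const _).const_add _
    have h3 := h2.rpow_const (p := -(p * α * N)) (Or.inl hu.ne')
    have h4 := (h3.const_mul ((2 * p * N + β) / (2 * p))).sub_const (β / (2 * p))
    have hfteq : ft = fun y : ℝ => (2 * p * N + β) / (2 * p) *
        (1 - 1 / (p * α ^ 2 * N ^ 2)
          + Real.exp (2 * p * α * N * y) / (p * α ^ 2 * N ^ 2)) ^ (-(p * α * N))
        - β / (2 * p) := funext hft
    rw [hgt x, hft x, hfteq]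
    convert h4 using 1
    case e'_4 => rfl
    case e'_5 => rfl
    rw [← hu_def]
    have hbr : ((1 - 1 / (p * α ^ 2 * N ^ 2)) * Real.exp (-2 * p * α * N * x)
        + 1 / (p * α ^ 2 * N ^ 2)) = u / Real.exp (2 * p * α * N * x) := by
      rw [eq_div_iff hE.ne', hub]; ring
    rw [hbr]
    have hpow : u ^ (-(p * α * N) - 1) = u ^ (-(p * α * N)) / u := by
      rw [Real.rpow_sub hu, Real.rpow_one]
    rw [hpow]
    have hune : u ≠ 0 := hu.ne'
    field_simp
    ring
end

section
/- Let c > 0, α > 0, β > 0 and ε ∈ (0,1) be real numbers, and for p = c·N^{-1-ε} let x̃*(N) = (1/(2 α p N))·ln( [ ((2 p N + β)/(p N + β))^{1/(p α N)} - 1 ] · p α² N² + 1 ). Then lim_{N→∞} ( 2 α c · x̃*(N)/N^{ε} - (1-ε)·ln N ) = ln( (e^{1/(α β)} - 1)·c·α² ). In particular x̃*(N) grows like (N^{ε}/(2 α c))·((1-ε) ln N + O(1)) as N → ∞. -/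
open Filter
open Real

/-- For `c, α, β > 0`, `ε ∈ (0,1)` and `p = c·N^{-1-ε}`, the bound
`x̃*(N) = (1/(2αpN))·ln( [((2pN+β)/(pN+β))^{1/(pαN)} - 1]·pα²N² + 1 )` satisfies
`lim_{N→∞} ( 2αc·x̃*(N)/N^ε - (1-ε)·ln N ) = ln( (e^{1/(αβ)} - 1)·c·α² )`,
i.e. `x̃*(N) ≈ (N^ε/(2αc))·((1-ε)·ln N + O(1))` — the intermediate crossover regime. -/
theorem xstar_crossover_scaling (c α β ε : ℝ) (hc : 0 < c) (hα : 0 < α) (hβ : 0 < β)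
    (hε : ε ∈ Set.Ioo (0:ℝ) 1) (xstar : ℝ → ℝ)
    (hxstar : ∀ N : ℝ, 0 < N → xstar N =
      1 / (2 * α * (c * N ^ (-(1 + ε))) * N) *
        Real.log
          ((((2 * (c * N ^ (-(1 + ε))) * N + β) / ((c * N ^ (-(1 + ε))) * N + β))
              ^ (1 / ((c * N ^ (-(1 + ε))) * α * N)) - 1)
            * ((c * N ^ (-(1 + ε))) * α ^ 2 * N ^ (2:ℕ)) + 1)) :
    Tendsto (fun N : ℝ => 2 * α * c * xstar N / N ^ ε - (1 - ε) * Real.log N)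
      atTop (nhds (Real.log ((Real.exp (1 / (α * β)) - 1) * c * α ^ 2))) := by
  obtain ⟨hε0, hε1⟩ := hε
  set K : ℝ := (Real.exp (1 / (α * β)) - 1) * c * α ^ 2 with hKdef
  have hexp1 : 1 < Real.exp (1 / (α * β)) := by
    rw [show (1:ℝ) = Real.exp 0 by simp]
    exact Real.exp_lt_exp.mpr (by positivity)
  have hKpos : 0 < K := by
    have h1 : 0 < Real.exp (1 / (α * β)) - 1 := by linarith
    rw [hKdef]; positivity
  set t : ℝ → ℝ := fun N => c * N ^ (-ε) with htdef
  have ht0 : Tendsto t atTop (nhdsWithin 0 (Set.Ioi 0)) := by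
    rw [tendsto_nhdsWithin_iff]
    constructor
    · have := (tendsto_rpow_neg_atTop hε0).const_mul c
      simpa using this
    · filter_upwards [eventually_gt_atTop 0] with N hN
      exact mul_pos hc (Real.rpow_pos_of_pos hN _)
  set G : ℝ → ℝ := fun s => Real.log ((2 * s + β) / (s + β)) with hGdef
  have hG : HasDerivAt G (1 / β) 0 := by
    have h1 : HasDerivAt (fun s : ℝ => 2 * s + β) 2 0 := by
      simpa using ((hasDerivAt_id (0:ℝ)).const_mul 2).add_const β
    have h2 : HasDerivAt (fun s : ℝ => s + β) 1 0 := by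
      simpa using (hasDerivAt_id (0:ℝ)).add_const β
    have hdiv := h1.div h2 (by simpa using hβ.ne')
    have hne : (2 * (0:ℝ) + β) / (0 + β) ≠ 0 := by
      simp [div_self hβ.ne']
    have := hdiv.log hne
    convert this using 1
    · rfl
    simp only [Pi.div_apply]
    field_simp
    ring
  have hslope : Tendsto (fun N => slope G 0 (t N)) atTop (nhds (1 / β)) := by
    have h := hasDerivAt_iff_tendsto_slope.mp hG
    exact h.comp (ht0.mono_right (nhdsWithin_mono _ (fun x hx => ne_of_gt hx)))
  set g : ℝ → ℝ := fun N => ((2 * t N + β) / (t N + β)) ^ (1 / (α * t N)) with hgdef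
  have hg : Tendsto g atTop (nhds (Real.exp (1 / (α * β)))) := by
    have h1 : Tendsto (fun N => Real.exp ((1 / α) * slope G 0 (t N))) atTop
        (nhds (Real.exp (1 / (α * β)))) := by
      have h0 := Real.continuous_exp.continuousAt.tendsto.comp
        (hslope.const_mul (1 / α))
      have heq : (1 / α) * (1 / β) = 1 / (α * β) := by field_simp
      rw [← heq]
      exact h0
    refine Tendsto.congr' ?_ h1
    filter_upwards [ht0.eventually self_mem_nhdsWithin] with N hN
    have hs : 0 < t N := hN
    have hbase : 0 < (2 * t N + β) / (t N + β) := by positivity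
    rw [slope_def_field]
    simp only [hGdef, hgdef]
    rw [show (2 * (0:ℝ) + β) / (0 + β) = 1 by field_simp; ring]
    rw [Real.log_one, Real.rpow_def_of_pos hbase]
    congr 1
    field_simp
    ring
  set B : ℝ → ℝ := fun N => (g N - 1) * (c * α ^ 2) + N ^ (ε - 1) with hBdef
  have hB : Tendsto B atTop (nhds K) := by
    have h1 := (hg.sub_const 1).mul_const (c * α ^ 2)
    have h2 : Tendsto (fun N : ℝ => N ^ (ε - 1)) atTop (nhds 0) := by
      have := tendsto_rpow_neg_atTop (show 0 < 1 - ε by linarith)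
      simpa [neg_sub] using this
    have h3 := h1.add h2
    convert h3 using 2
    rw [hKdef]; ring
  have hlogB : Tendsto (fun N => Real.log (B N)) atTop (nhds (Real.log K)) :=
    hB.log hKpos.ne'
  refine Tendsto.congr' ?_ hlogB
  filter_upwards [eventually_gt_atTop 0, ht0.eventually self_mem_nhdsWithin,
    hB.eventually (eventually_gt_nhds hKpos)] with N hN hs hBpos
  have hs' : 0 < t N := hs
  have hs1 : c * N ^ (-(1 + ε)) * N = t N := by
    simp only [htdef]
    rw [mul_assoc]
    congr 1
    rw [show (-(1 + ε)) = -ε + -1 by ring, Real.rpow_add hN, Real.rpow_neg_one]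
    field_simp
  have hD : 2 * α * (c * N ^ (-(1 + ε))) * N = 2 * α * t N := by
    rw [show 2 * α * (c * N ^ (-(1 + ε))) * N = 2 * α * (c * N ^ (-(1 + ε)) * N) by ring, hs1]
  have hexp : c * N ^ (-(1 + ε)) * α * N = α * t N := by
    rw [show c * N ^ (-(1 + ε)) * α * N = α * (c * N ^ (-(1 + ε)) * N) by ring, hs1]
  have h2' : N ^ (-(1 + ε)) * N ^ (2:ℕ) = N ^ (1 - ε) := by
    rw [← Real.rpow_natCast N 2, ← Real.rpow_add hN]
    congr 1
    push_cast
    ring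
  have hcoef : c * N ^ (-(1 + ε)) * α ^ 2 * N ^ (2:ℕ) = c * α ^ 2 * N ^ (1 - ε) := by
    rw [show c * N ^ (-(1 + ε)) * α ^ 2 * N ^ (2:ℕ)
        = c * α ^ 2 * (N ^ (-(1 + ε)) * N ^ (2:ℕ)) by ring, h2']
  have h3' : N ^ (ε - 1) * N ^ (1 - ε) = 1 := by
    rw [← Real.rpow_add hN]
    norm_num
  have hxN := hxstar N hN
  rw [hxN]
  rw [show 2 * (c * N ^ (-(1 + ε))) * N = 2 * (c * N ^ (-(1 + ε)) * N) by ring]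
  rw [hs1, hexp, hcoef, hD]
  have harg : (((2 * t N + β) / (t N + β)) ^ (1 / (α * t N)) - 1) * (c * α ^ 2 * N ^ (1 - ε)) + 1
      = B N * N ^ (1 - ε) := by
    simp only [hBdef, hgdef]
    rw [add_mul, h3']
    ring
  rw [harg, Real.log_mul hBpos.ne' (Real.rpow_pos_of_pos hN _).ne', Real.log_rpow hN]
  have hts : t N = c / N ^ ε := by
    simp only [htdef]
    rw [Real.rpow_neg hN.le, div_eq_mul_inv]
  rw [hts]
  have hNε : (0:ℝ) < N ^ ε := Real.rpow_pos_of_pos hN ε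
  field_simp
  ring
end
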